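/- Let (G, M, I) be a formal context and let D be a family of subsets of M (the premises of the classification rules of a binary decision tree) satisfying: (i) for every ρ ∈ D the extent ρ′ is nonempty; (ii) distinct premises in D have distinct extents (ρ₁ ≠ ρ₂ in D implies ρ₁′ ≠ ρ₂′); (iii) for any ρ₁, ρ₂ ∈ D with ρ₁ ⊄ ρ₂ and ρ₂ ⊄ ρ₁, there exist attributes m₁ ∈ ρ₁ and m₂ ∈ ρ₂ such that no object g ∈ G satisfies both (g, m₁) ∈ I and (g, m₂) ∈ I. Then for all ρ₁, ρ₂ ∈ D one has ρ₁ ⊆ ρ₂ if and only if ρ₂′ ⊆ ρ₁′ (equivalently, ρ₁″ ⊆ ρ₂″); hence the map ρ ↦ (ρ′, ρ″) is an order isomorphism from (D, ⊆) onto its image in the concept lattice ordered by inclusion of intents, i.e., the set of formal concepts induced by a decision tree is order-isomorphic to the decision tree. -/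
import Mathlib


/-- The extent of a set of attributes `ρ` in the formal context `(G, M, I)`. -/
def extent {G M : Type} (I : G → M → Prop) (ρ : Set M) : Set G :=
  {g | ∀ m ∈ ρ, I g m}

/-- The intent of a set of objects `A` in the formal context `(G, M, I)`. -/
def intent {G M : Type} (I : G → M → Prop) (A : Set G) : Set M :=
  {m | ∀ g ∈ A, I g m}

lemma extent_antitone {G M : Type} (I : G → M → Prop) {ρ₁ ρ₂ : Set M}
    (h : ρ₁ ⊆ ρ₂) : extent I ρ₂ ⊆ extent I ρ₁ :=
  fun g hg m hm => hg m (h hm)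

lemma subset_extent_intent {G M : Type} (I : G → M → Prop) (A : Set G) :
    A ⊆ extent I (intent I A) :=
  fun g hg m hm => hm g hg

lemma intent_antitone {G M : Type} (I : G → M → Prop) {A B : Set G}
    (h : A ⊆ B) : intent I B ⊆ intent I A :=
  fun m hm g hg => hm g (h hg)

lemma extent_intent_extent {G M : Type} (I : G → M → Prop) (ρ : Set M) :
    extent I (intent I (extent I ρ)) = extent I ρ := by
  apply Set.Subset.antisymm
  · intro g hg m hm
    exact hg m (fun g' hg' => hg' m hm)
  · exact subset_extent_intent I _

/-- Let `D` be the family of premises of a binary decision tree over the context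
`(G, M, I)`, i.e. a family of subsets of `M` such that: (i) every premise has a
nonempty extent; (ii) distinct premises have distinct extents; (iii) any two
inclusion-incomparable premises contain a pair of mutually exclusive attributes.
Then for all `ρ₁, ρ₂ ∈ D`, `ρ₁ ⊆ ρ₂` iff `ρ₂′ ⊆ ρ₁′` iff `ρ₁″ ⊆ ρ₂″`; hence
`ρ ↦ (ρ′, ρ″)` is an order isomorphism from `(D, ⊆)` onto its image in the
concept lattice ordered by inclusion of intents. -/
theorem decision_tree_concepts_order_isomorphic
    (G M : Type) (I : G → M → Prop) (D : Set (Set M))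
    (hne : ∀ ρ ∈ D, (extent I ρ).Nonempty)
    (hinj : ∀ ρ₁ ∈ D, ∀ ρ₂ ∈ D, ρ₁ ≠ ρ₂ → extent I ρ₁ ≠ extent I ρ₂)
    (hexcl : ∀ ρ₁ ∈ D, ∀ ρ₂ ∈ D, ¬(ρ₁ ⊆ ρ₂) → ¬(ρ₂ ⊆ ρ₁) →
      ∃ m₁ ∈ ρ₁, ∃ m₂ ∈ ρ₂, ∀ g : G, ¬(I g m₁ ∧ I g m₂)) :
    ∀ ρ₁ ∈ D, ∀ ρ₂ ∈ D,
      (ρ₁ ⊆ ρ₂ ↔ extent I ρ₂ ⊆ extent I ρ₁) ∧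
      (ρ₁ ⊆ ρ₂ ↔ intent I (extent I ρ₁) ⊆ intent I (extent I ρ₂)) := by
  intro ρ₁ h1 ρ₂ h2
  have key : ρ₁ ⊆ ρ₂ ↔ extent I ρ₂ ⊆ extent I ρ₁ := by
    constructor
    · exact extent_antitone I
    · intro hE
      by_contra hns
      by_cases hr : ρ₂ ⊆ ρ₁
      · have hE' : extent I ρ₁ ⊆ extent I ρ₂ := extent_antitone I hr
        exact hinj ρ₁ h1 ρ₂ h2 (fun h => hns (h ▸ Set.Subset.rfl))
          (Set.Subset.antisymm hE' hE)
      · obtain ⟨m₁, hm₁, m₂, hm₂, hg⟩ := hexcl ρ₁ h1 ρ₂ h2 hns hr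
        obtain ⟨g, hgE⟩ := hne ρ₂ h2
        exact hg g ⟨hE hgE m₁ hm₁, hgE m₂ hm₂⟩
  refine ⟨key, key.trans ?_⟩
  constructor
  · exact intent_antitone I
  · intro h
    have := extent_antitone I h
    rwa [extent_intent_extent, extent_intent_extent] at this
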